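/- arXiv:2011.01343 — 2 statements merged into one kernel-verified Lean document; each statement's English description precedes it below -/
import Mathlib

section
/- For every t ∈ ℕ the pathwise identity M_t / S_t = 1 + Q_t − L_t holds. Moreover Q = (Q_t) is a supermartingale, and L = (L_t) is a nondecreasing process that satisfies L_t = L_{t−1} whenever S_t = S_{t−1} (L only increases when M attains a new maximum). Consequently Z_t ≤ 1 + Q_t − L_t almost surely. -/
open MeasureTheory Filter Set

/-- The running maximum `S t = max_{s ≤ t} M s`. -/
noncomputable def runMax {Ω : Type*} (M : ℕ → Ω → ℝ) (t : ℕ) (ω : Ω) : ℝ :=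
  (Finset.range (t + 1)).sup' (Finset.nonempty_range_iff.mpr (Nat.succ_ne_zero t))
    (fun s => M s ω)

/-- The (ℕ ∪ {∞})-valued time of the final attained maximum of `M`. -/
noncomputable def tauF {Ω : Type*} (M : ℕ → Ω → ℝ) (ω : Ω) : ℕ∞ :=
  ⨆ s ∈ {s : ℕ | M s ω = runMax M s ω}, (s : ℕ∞)

/-- `Q t = Σ_{i=1}^t (M_i − M_{i−1})/S_i`. -/
noncomputable def Qproc {Ω : Type*} (M : ℕ → Ω → ℝ) (t : ℕ) (ω : Ω) : ℝ :=
  ∑ i ∈ Finset.range t, (M (i + 1) ω - M i ω) / runMax M (i + 1) ω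

/-- `L t = Σ_{q=1}^t M_{q−1} (1/S_{q−1} − 1/S_q)`. -/
noncomputable def Lproc {Ω : Type*} (M : ℕ → Ω → ℝ) (t : ℕ) (ω : Ω) : ℝ :=
  ∑ q ∈ Finset.range t, M q ω * (1 / runMax M q ω - 1 / runMax M (q + 1) ω)

set_option linter.unusedSectionVars false

section Aux

variable {Ω : Type*} {M : ℕ → Ω → ℝ}

lemma runMax_zero (ω : Ω) : runMax M 0 ω = M 0 ω := by
  simp [runMax]

lemma le_runMax {s t : ℕ} (h : s ≤ t) (ω : Ω) : M s ω ≤ runMax M t ω :=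
  Finset.le_sup' (fun s => M s ω) (Finset.mem_range.mpr (Nat.lt_succ_of_le h))

lemma runMax_succ (t : ℕ) (ω : Ω) :
    runMax M (t + 1) ω = max (runMax M t ω) (M (t + 1) ω) := by
  refine le_antisymm (Finset.sup'_le _ _ fun s hs => ?_) (max_le ?_ ?_)
  · rcases Nat.lt_succ_iff_lt_or_eq.mp (Finset.mem_range.mp hs) with h | h
    · exact le_max_of_le_left (le_runMax (Nat.lt_succ_iff.mp h) ω)
    · exact h ▸ le_max_right _ _
  · exact Finset.sup'_le _ _ fun s hs => le_runMax
      (Nat.le_succ_of_le (Nat.lt_succ_iff.mp (Finset.mem_range.mp hs))) ω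
  · exact le_runMax le_rfl ω

lemma runMax_mono (ω : Ω) : Monotone fun t => runMax M t ω :=
  monotone_nat_of_le_succ fun t => by rw [runMax_succ]; exact le_max_left _ _

lemma one_le_runMax (hone : ∀ ω, M 0 ω = 1) (t : ℕ) (ω : Ω) : 1 ≤ runMax M t ω := by
  have := le_runMax (M := M) (Nat.zero_le t) ω; rwa [hone] at this



lemma Qproc_succ (t : ℕ) (ω : Ω) :
    Qproc M (t + 1) ω = Qproc M t ω + (M (t + 1) ω - M t ω) / runMax M (t + 1) ω := by
  simp only [Qproc]; rw [Finset.sum_range_succ]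

lemma Lproc_succ (t : ℕ) (ω : Ω) :
    Lproc M (t + 1) ω
      = Lproc M t ω + M t ω * (1 / runMax M t ω - 1 / runMax M (t + 1) ω) := by
  simp only [Lproc]; rw [Finset.sum_range_succ]

lemma decomp (hone : ∀ ω, M 0 ω = 1) (t : ℕ) (ω : Ω) :
    M t ω / runMax M t ω = 1 + Qproc M t ω - Lproc M t ω := by
  induction t with
  | zero => simp [Qproc, Lproc, runMax_zero, hone]
  | succ t ih =>
      have h1 : (0:ℝ) < runMax M t ω := lt_of_lt_of_le one_pos (one_le_runMax hone t ω)
      have h2 : (0:ℝ) < runMax M (t+1) ω := lt_of_lt_of_le one_pos (one_le_runMax hone _ ω)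
      rw [Qproc_succ, Lproc_succ]
      have e : 1 + (Qproc M t ω + (M (t + 1) ω - M t ω) / runMax M (t + 1) ω)
          - (Lproc M t ω + M t ω * (1 / runMax M t ω - 1 / runMax M (t + 1) ω))
          = M t ω / runMax M t ω + (M (t + 1) ω - M t ω) / runMax M (t + 1) ω
            - M t ω * (1 / runMax M t ω - 1 / runMax M (t + 1) ω) := by
        rw [ih]; ring
      rw [e]
      field_simp
      ring

lemma Lproc_mono (hone : ∀ ω, M 0 ω = 1) (hnonneg : ∀ t ω, 0 ≤ M t ω) (ω : Ω) :
    Monotone (fun t => Lproc M t ω) := by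
  refine monotone_nat_of_le_succ fun t => ?_
  rw [Lproc_succ, le_add_iff_nonneg_right]
  have h1 : (0:ℝ) < runMax M t ω := lt_of_lt_of_le one_pos (one_le_runMax hone t ω)
  have h2 : runMax M t ω ≤ runMax M (t+1) ω := runMax_mono ω (Nat.le_succ t)
  have : 1 / runMax M (t+1) ω ≤ 1 / runMax M t ω := one_div_le_one_div_of_le h1 h2
  exact mul_nonneg (hnonneg t ω) (by linarith)

lemma Lproc_flat (t : ℕ) (ω : Ω) (h : runMax M (t + 1) ω = runMax M t ω) :
    Lproc M (t + 1) ω = Lproc M t ω := by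
  rw [Lproc_succ, h]; simp

section Meas
variable {m0 : MeasurableSpace Ω} {P : Measure Ω} [IsProbabilityMeasure P]
  {ℱ : Filtration ℕ m0}

lemma sm_runMax (hadp : StronglyAdapted ℱ M) (t : ℕ) : StronglyMeasurable[ℱ t] (runMax M t) := by
  induction t with
  | zero =>
      have : runMax M 0 = M 0 := funext fun ω => runMax_zero ω
      rw [this]; exact hadp 0
  | succ t ih =>
      have : runMax M (t + 1) = fun ω => max (runMax M t ω) (M (t + 1) ω) :=
        funext fun ω => runMax_succ t ω
      rw [this]
      exact (((ih.mono (ℱ.mono (Nat.le_succ t))).measurable.max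
        (hadp (t + 1)).measurable).stronglyMeasurable)

lemma meas_M (hadp : StronglyAdapted ℱ M) (s : ℕ) : Measurable[m0] (M s) :=
  ((hadp s).mono (ℱ.le s)).measurable

lemma meas_runMax (hadp : StronglyAdapted ℱ M) (t : ℕ) : Measurable[m0] (runMax M t) :=
  ((sm_runMax hadp t).mono (ℱ.le t)).measurable

lemma sm_Qterm (hadp : StronglyAdapted ℱ M) (i : ℕ) :
    StronglyMeasurable[ℱ (i + 1)] (fun ω => (M (i + 1) ω - M i ω) / runMax M (i + 1) ω) := by
  have h1 : Measurable[ℱ (i+1)] (fun ω => M (i + 1) ω - M i ω) :=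
    ((hadp (i+1)).measurable.sub ((hadp i).mono (ℱ.mono (Nat.le_succ i))).measurable)
  exact (h1.div (sm_runMax hadp (i+1)).measurable).stronglyMeasurable

lemma int_Qterm (hsuper : Supermartingale M ℱ P) (hnonneg : ∀ t ω, 0 ≤ M t ω)
    (hone : ∀ ω, M 0 ω = 1) (i : ℕ) :
    Integrable (fun ω => (M (i + 1) ω - M i ω) / runMax M (i + 1) ω) P := by
  refine Integrable.mono ((hsuper.integrable (i+1)).add (hsuper.integrable i))
    (((sm_Qterm hsuper.stronglyAdapted i).mono (ℱ.le _)).aestronglyMeasurable) (ae_of_all _ fun ω => ?_)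
  have hS : (1:ℝ) ≤ runMax M (i+1) ω := one_le_runMax hone _ ω
  have : |(M (i + 1) ω - M i ω) / runMax M (i + 1) ω| ≤ |M (i + 1) ω - M i ω| := by
    rw [abs_div, abs_of_nonneg (by linarith : (0:ℝ) ≤ runMax M (i+1) ω)]
    exact div_le_self (abs_nonneg _) hS
  simp only [Real.norm_eq_abs, Pi.add_apply]
  refine this.trans ((abs_sub _ _).trans ?_)
  rw [abs_of_nonneg (hnonneg _ ω), abs_of_nonneg (hnonneg _ ω),
    abs_of_nonneg (by have h1 := hnonneg (i+1) ω; have h2 := hnonneg i ω; linarith : (0:ℝ) ≤ M (i+1) ω + M i ω)]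

lemma int_Qproc (hsuper : Supermartingale M ℱ P) (hnonneg : ∀ t ω, 0 ≤ M t ω)
    (hone : ∀ ω, M 0 ω = 1) (t : ℕ) : Integrable (Qproc M t) P := by
  have : Qproc M t
      = fun ω => ∑ i ∈ Finset.range t, (M (i + 1) ω - M i ω) / runMax M (i + 1) ω := rfl
  rw [this]
  exact integrable_finset_sum _ fun i _ => int_Qterm hsuper hnonneg hone i

lemma Qproc_supermartingale (hsuper : Supermartingale M ℱ P) (hnonneg : ∀ t ω, 0 ≤ M t ω)
    (hone : ∀ ω, M 0 ω = 1) : Supermartingale (Qproc M) ℱ P := by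
  have hadp : StronglyAdapted ℱ M := hsuper.stronglyAdapted
  refine supermartingale_nat ?_ (int_Qproc hsuper hnonneg hone) ?_
  · intro t
    have : Qproc M t
        = fun ω => ∑ i ∈ Finset.range t, (M (i + 1) ω - M i ω) / runMax M (i + 1) ω := rfl
    rw [this]
    exact Finset.stronglyMeasurable_fun_sum _ fun i hi =>
      (sm_Qterm hadp i).mono (ℱ.mono (Finset.mem_range.mp hi))
  · intro t
    set D : Ω → ℝ := fun ω => (M (t + 1) ω - M t ω) / runMax M (t + 1) ω with hD
    set D' : Ω → ℝ := fun ω => (runMax M t ω)⁻¹ * (M (t + 1) ω - M t ω) with hD'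
    have hDD' : ∀ ω, D ω ≤ D' ω := by
      intro ω
      have h1 : (0:ℝ) < runMax M t ω := lt_of_lt_of_le one_pos (one_le_runMax hone t ω)
      have h2 : runMax M t ω ≤ runMax M (t+1) ω := runMax_mono ω (Nat.le_succ t)
      rcases le_or_gt (M t ω) (M (t+1) ω) with h | h
      · simp only [hD, hD', ← div_eq_inv_mul]
        exact div_le_div_of_nonneg_left (by linarith) h1 h2 |>.trans_eq rfl |>.trans le_rfl
          |>.trans le_rfl
      · have : runMax M (t+1) ω = runMax M t ω := by
          rw [runMax_succ]
          exact max_eq_left ((h.le).trans (le_runMax le_rfl ω))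
        simp only [hD, hD', this, ← div_eq_inv_mul, le_refl]
    have hintD : Integrable D P := int_Qterm hsuper hnonneg hone t
    have hintsub : Integrable (fun ω => M (t + 1) ω - M t ω) P :=
      (hsuper.integrable (t+1)).sub (hsuper.integrable t)
    have hintD' : Integrable D' P := by
      have hmD' : Measurable[m0] D' :=
        (meas_runMax hadp t).inv.mul ((meas_M hadp (t+1)).sub (meas_M hadp t))
      refine Integrable.mono hintsub hmD'.stronglyMeasurable.aestronglyMeasurable
        (ae_of_all _ fun ω => ?_)
      have h1 : (1:ℝ) ≤ runMax M t ω := one_le_runMax hone t ω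
      simp only [Real.norm_eq_abs, hD', abs_mul, abs_inv]
      rw [abs_of_nonneg (by linarith : (0:ℝ) ≤ runMax M t ω)]
      calc (runMax M t ω)⁻¹ * |M (t + 1) ω - M t ω|
          ≤ 1 * |M (t + 1) ω - M t ω| := by
            apply mul_le_mul_of_nonneg_right _ (abs_nonneg _)
            exact inv_le_one_of_one_le₀ h1
        _ = |M (t + 1) ω - M t ω| := one_mul _
    have hQsucc : Qproc M (t+1) = Qproc M t + D := by
      funext ω; rw [Pi.add_apply, Qproc_succ]
    have step1 : P[Qproc M (t+1)|ℱ t] =ᵐ[P] P[Qproc M t|ℱ t] + P[D|ℱ t] := by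
      rw [hQsucc]; exact condExp_add (int_Qproc hsuper hnonneg hone t) hintD _
    have step2 : P[Qproc M t|ℱ t] =ᵐ[P] Qproc M t :=
      condExp_of_stronglyMeasurable (ℱ.le t)
        (Finset.stronglyMeasurable_fun_sum _ fun i hi =>
          (sm_Qterm hadp i).mono (ℱ.mono (Finset.mem_range.mp hi)))
        (int_Qproc hsuper hnonneg hone t) ▸ EventuallyEq.rfl
    have step3 : P[D|ℱ t] ≤ᵐ[P] P[D'|ℱ t] :=
      condExp_mono hintD hintD' (ae_of_all _ hDD')
    have hc : StronglyMeasurable[ℱ t] (fun ω => (runMax M t ω)⁻¹) :=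
      (sm_runMax hadp t).measurable.inv.stronglyMeasurable
    have hD'eq : D' = (fun ω => (runMax M t ω)⁻¹) * (M (t+1) - M t) := rfl
    have step4 : P[D'|ℱ t]
        =ᵐ[P] (fun ω => (runMax M t ω)⁻¹) * P[M (t+1) - M t|ℱ t] := by
      rw [hD'eq]
      exact condExp_mul_of_stronglyMeasurable_left hc (hD'eq ▸ hintD') hintsub
    have step5 : P[M (t+1) - M t|ℱ t] =ᵐ[P] P[M (t+1)|ℱ t] - M t := by
      refine (condExp_sub (hsuper.integrable (t+1)) (hsuper.integrable t) _).trans ?_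
      have h : P[M t|ℱ t] = M t :=
        condExp_of_stronglyMeasurable (ℱ.le t) (hadp t) (hsuper.integrable t)
      rw [h]
    have hle : P[M (t+1)|ℱ t] ≤ᵐ[P] M t := hsuper.2.1 t (t+1) (Nat.le_succ t)
    filter_upwards [step1, step2, step3, step4, step5, hle] with ω h1 h2 h3 h4 h5 h6
    have hc0 : (0:ℝ) ≤ (runMax M t ω)⁻¹ :=
      inv_nonneg.mpr (by linarith [one_le_runMax hone t ω])
    have : (P[D|ℱ t]) ω ≤ 0 := by
      refine h3.trans ?_
      rw [h4]
      simp only [Pi.mul_apply]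
      have : (P[M (t+1) - M t|ℱ t]) ω ≤ 0 := by
        rw [h5]; simp only [Pi.sub_apply]; linarith
      exact mul_nonpos_of_nonneg_of_nonpos hc0 this
    calc (P[Qproc M (t+1)|ℱ t]) ω = (P[Qproc M t|ℱ t]) ω + (P[D|ℱ t]) ω := h1
      _ ≤ Qproc M t ω + 0 := by rw [h2]; linarith
      _ = Qproc M t ω := add_zero _


lemma mem_B_iff (t : ℕ) (ω : Ω) :
    (t : ℕ∞) ≤ tauF M ω ↔ ∃ s, t ≤ s ∧ M s ω = runMax M s ω := by
  constructor
  · intro h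
    rcases Nat.eq_zero_or_pos t with rfl | ht
    · exact ⟨0, le_rfl, (runMax_zero ω).symm⟩
    · by_contra hc
      push_neg at hc
      have hle : tauF M ω ≤ ((t - 1 : ℕ) : ℕ∞) := by
        refine iSup₂_le fun s hs => ?_
        have : ¬ t ≤ s := fun hts => hc s hts hs
        exact_mod_cast Nat.le_sub_one_of_lt (Nat.lt_of_not_le this)
      have : (t : ℕ∞) ≤ ((t - 1 : ℕ) : ℕ∞) := h.trans hle
      have := Nat.cast_le.mp this
      omega
  · rintro ⟨s, hts, hs⟩
    refine le_trans (Nat.cast_le.mpr hts) ?_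
    exact le_iSup₂ (f := fun (s : ℕ) (_ : s ∈ {s : ℕ | M s ω = runMax M s ω}) => (s : ℕ∞)) s hs

lemma final_ineq (hsuper : Supermartingale M ℱ P) (hnonneg : ∀ t ω, 0 ≤ M t ω)
    (hone : ∀ ω, M 0 ω = 1) (t : ℕ) :
    P[Set.indicator {ω' | (t : ℕ∞) ≤ tauF M ω'} (fun _ => (1 : ℝ))|ℱ t]
      ≤ᵐ[P] fun ω => M t ω / runMax M t ω := by
  have hadp : StronglyAdapted ℱ M := hsuper.stronglyAdapted
  set B : Set Ω := {ω' | (t : ℕ∞) ≤ tauF M ω'} with hB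
  set g : Ω → ℝ := fun ω => M t ω / runMax M t ω with hg
  -- auxiliary process for hitting times
  set Y : ℕ → Ω → ℝ := fun s ω => M s ω - runMax M (min s t) ω with hY
  have hY_adapted : StronglyAdapted ℱ Y := fun s =>
    ((hadp s).measurable.sub
      (((sm_runMax hadp (min s t)).mono (ℱ.mono (min_le_left s t))).measurable)).stronglyMeasurable
  set τ : ℕ → Ω → ℕ := fun n => hittingBtwn Y (Set.Ici (0:ℝ)) t (t + n) with hτdef
  have hτ : ∀ n, IsStoppingTime ℱ (fun ω => (τ n ω : WithTop ℕ)) := fun n =>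
    hY_adapted.adapted.isStoppingTime_hittingBtwn measurableSet_Ici
  set A : ℕ → Set Ω := fun n => {ω | ∃ j ∈ Set.Icc t (t + n), Y j ω ∈ Set.Ici (0:ℝ)} with hA
  have hA_meas : ∀ n, MeasurableSet[m0] (A n) := by
    intro n
    have : A n = ⋃ j ∈ Set.Icc t (t + n), {ω | (0:ℝ) ≤ Y j ω} := by
      ext ω; simp [hA, Set.mem_Ici]
    rw [this]
    refine MeasurableSet.biUnion (Set.to_countable _) fun j _ => ?_
    exact measurableSet_le measurable_const
      ((meas_M hadp j).sub (meas_runMax hadp (min j t)))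
  have hA_mono : Monotone A := by
    intro n m h ω hω
    obtain ⟨j, hj, hjY⟩ := hω
    exact ⟨j, ⟨hj.1, hj.2.trans (by omega)⟩, hjY⟩
  have hBsub : B ⊆ ⋃ n, A n := by
    intro ω hω
    obtain ⟨s, hts, hs⟩ := (mem_B_iff t ω).mp hω
    refine Set.mem_iUnion.mpr ⟨s - t, s, ⟨hts, by omega⟩, ?_⟩
    simp only [hY, Set.mem_Ici, min_eq_right hts, sub_nonneg]
    rw [hs]
    exact runMax_mono ω hts
  have hS_pos : ∀ ω, (0:ℝ) < runMax M t ω := fun ω =>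
    lt_of_lt_of_le one_pos (one_le_runMax hone t ω)
  -- key per-n estimate
  have hn : ∀ n, P[Set.indicator (A n) (fun _ => (1:ℝ))|ℱ t] ≤ᵐ[P] g := by
    intro n
    set N : Ω → ℝ := fun ω => M (τ n ω) ω with hN
    have hτ_le : ∀ ω, τ n ω ≤ t + n := fun ω => hittingBtwn_le ω
    have hτ_ge : ∀ ω, t ≤ τ n ω := fun ω => le_hittingBtwn (by omega) ω
    have subm : Submartingale (MeasureTheory.stoppedProcess (-M) (fun ω => (τ n ω : WithTop ℕ))) ℱ P :=
      hsuper.neg.stoppedProcess (hτ n)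
    have hsp : ∀ i, MeasureTheory.stoppedProcess (-M) (fun ω => (τ n ω : WithTop ℕ)) i
        = -(MeasureTheory.stoppedProcess M (fun ω => (τ n ω : WithTop ℕ)) i) := fun i => rfl
    have stP_t : MeasureTheory.stoppedProcess M (fun ω => (τ n ω : WithTop ℕ)) t = M t := by
      funext ω
      exact MeasureTheory.stoppedProcess_eq_of_le (WithTop.coe_le_coe.mpr (hτ_ge ω))
    have stP_n : MeasureTheory.stoppedProcess M (fun ω => (τ n ω : WithTop ℕ)) (t + n) = N := by
      funext ω
      rw [MeasureTheory.stoppedProcess_eq_of_ge (τ := fun ω => (τ n ω : WithTop ℕ)) (WithTop.coe_le_coe.mpr (hτ_le ω))]; rfl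
    have hintN : Integrable N P := by
      have := (subm.integrable (t + n))
      rw [hsp, stP_n] at this
      simpa using this.neg
    have hcond : P[N|ℱ t] ≤ᵐ[P] M t := by
      have h1 := subm.2.1 t (t + n) (by omega)
      rw [hsp, hsp, stP_t, stP_n] at h1
      have h2 : P[-N|ℱ t] =ᵐ[P] -P[N|ℱ t] := condExp_neg N _
      filter_upwards [h1, h2] with ω hω h2ω
      have : -(M t ω) ≤ -((P[N|ℱ t]) ω) := by
        calc -(M t ω) = (-M t) ω := rfl
          _ ≤ (P[-N|ℱ t]) ω := hω
          _ = -((P[N|ℱ t]) ω) := by rw [h2ω]; rfl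
      linarith
    have hpoint : ∀ ω,
        runMax M t ω * Set.indicator (A n) (fun _ => (1:ℝ)) ω ≤ N ω := by
      intro ω
      by_cases hω : ω ∈ A n
      · rw [Set.indicator_of_mem hω, mul_one]
        have hmem := hittingBtwn_mem_set (u := Y) (s := Set.Ici (0:ℝ)) (n := t) (m := t + n) hω
        have hmem' : Y (τ n ω) ω ∈ Set.Ici (0:ℝ) := hmem
        simp only [hY, Set.mem_Ici, sub_nonneg, min_eq_right (hτ_ge ω)] at hmem'
        exact hmem'
      · rw [Set.indicator_of_notMem hω, mul_zero]
        exact hnonneg _ ω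
    have hind : Integrable (Set.indicator (A n) fun _ => (1:ℝ)) P :=
      (integrable_const (1:ℝ)).indicator (hA_meas n)
    have hprod : Integrable (fun ω =>
        runMax M t ω * Set.indicator (A n) (fun _ => (1:ℝ)) ω) P := by
      refine Integrable.mono hintN
        (((meas_runMax hadp t).mul
          (measurable_const.indicator (hA_meas n))).stronglyMeasurable.aestronglyMeasurable)
        (ae_of_all _ fun ω => ?_)
      have h0 : (0:ℝ) ≤ runMax M t ω * Set.indicator (A n) (fun _ => (1:ℝ)) ω :=
        mul_nonneg (hS_pos ω).le (Set.indicator_nonneg (fun _ _ => zero_le_one) ω)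
      simp only [Real.norm_eq_abs, abs_of_nonneg h0,
        abs_of_nonneg (hnonneg (τ n ω) ω : 0 ≤ N ω)]
      exact (hpoint ω).trans (le_abs_self _)
    have hpull : P[(fun ω => runMax M t ω * Set.indicator (A n) (fun _ => (1:ℝ)) ω)|ℱ t]
        =ᵐ[P] fun ω => runMax M t ω * (P[Set.indicator (A n) (fun _ => (1:ℝ))|ℱ t]) ω := by
      have := condExp_mul_of_stronglyMeasurable_left (μ := P) (m := ℱ t)
        (sm_runMax hadp t) hprod hind
      exact this
    have hmono := condExp_mono (m := ℱ t) hprod hintN (ae_of_all _ hpoint)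
    filter_upwards [hpull, hmono, hcond] with ω h1 h2 h3
    have : runMax M t ω * (P[Set.indicator (A n) (fun _ => (1:ℝ))|ℱ t]) ω ≤ M t ω := by
      rw [← h1]; exact h2.trans h3
    rw [hg]
    rw [le_div_iff₀ (hS_pos ω)]
    linarith [this]
  -- measurability and integrability of g and indicator B
  have hg_sm : StronglyMeasurable[ℱ t] g :=
    ((hadp t).measurable.div (sm_runMax hadp t).measurable).stronglyMeasurable
  have hg_int : Integrable g P := by
    refine Integrable.mono (integrable_const (1:ℝ))
      (hg_sm.mono (ℱ.le t)).aestronglyMeasurable (ae_of_all _ fun ω => ?_)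
    have h1 : M t ω ≤ runMax M t ω := le_runMax le_rfl ω
    have h2 : (0:ℝ) ≤ g ω := div_nonneg (hnonneg t ω) (hS_pos ω).le
    simp only [Real.norm_eq_abs, abs_of_nonneg h2, norm_one]
    rw [hg, div_le_one (hS_pos ω)]
    exact h1
  have hB_meas : MeasurableSet[m0] B := by
    have : B = ⋃ s, ⋃ (_ : t ≤ s), {ω | M s ω = runMax M s ω} := by
      ext ω
      simp only [hB, Set.mem_setOf_eq, Set.mem_iUnion, mem_B_iff]
      tauto
    rw [this]
    exact MeasurableSet.iUnion fun s => MeasurableSet.iUnion fun _ =>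
      measurableSet_eq_fun (meas_M hadp s) (meas_runMax hadp s)
  have hf_int : Integrable (Set.indicator B fun _ => (1:ℝ)) P :=
    (integrable_const (1:ℝ)).indicator hB_meas
  -- trim argument
  have hm : ℱ t ≤ m0 := ℱ.le t
  have htrim : P[Set.indicator B (fun _ => (1:ℝ))|ℱ t] ≤ᵐ[P.trim hm] g := by
    refine ae_le_of_forall_setIntegral_le
      (integrable_condExp.trim hm stronglyMeasurable_condExp)
      (hg_int.trim hm hg_sm) (fun s hs _ => ?_)
    rw [← setIntegral_trim hm stronglyMeasurable_condExp hs, ← setIntegral_trim hm hg_sm hs]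
    have hs0 : MeasurableSet[m0] s := hm s hs
    -- LHS = P (B ∩ s)
    have hL : ∫ x in s, (P[Set.indicator B (fun _ => (1:ℝ))|ℱ t]) x ∂P
        = (P (s ∩ B)).toReal := by
      rw [setIntegral_condExp hm hf_int hs, setIntegral_indicator hB_meas]
      simp [setIntegral_const, measureReal_def]
    rw [hL]
    -- each A n
    have hAn : ∀ n, (P (s ∩ A n)).toReal ≤ ∫ x in s, g x ∂P := by
      intro n
      have e1 : (P (s ∩ A n)).toReal
          = ∫ x in s, Set.indicator (A n) (fun _ => (1:ℝ)) x ∂P := by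
        rw [setIntegral_indicator (hA_meas n)]
        simp [setIntegral_const, measureReal_def]
      have e2 : ∫ x in s, Set.indicator (A n) (fun _ => (1:ℝ)) x ∂P
          = ∫ x in s, (P[Set.indicator (A n) (fun _ => (1:ℝ))|ℱ t]) x ∂P :=
        (setIntegral_condExp hm ((integrable_const (1:ℝ)).indicator (hA_meas n)) hs).symm
      rw [e1, e2]
      exact setIntegral_mono_ae integrable_condExp.integrableOn hg_int.integrableOn (hn n)
    -- limit over n
    have hsub2 : s ∩ B ⊆ ⋃ n, s ∩ A n := by
      rw [← Set.inter_iUnion]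
      exact Set.inter_subset_inter_right s hBsub
    have hlim : Tendsto (fun n => P (s ∩ A n)) atTop (nhds (P (⋃ n, s ∩ A n))) :=
      tendsto_measure_iUnion_atTop fun n m h => Set.inter_subset_inter_right s (hA_mono h)
    have hlim2 : Tendsto (fun n => (P (s ∩ A n)).toReal) atTop
        (nhds ((P (⋃ n, s ∩ A n)).toReal)) :=
      (ENNReal.tendsto_toReal (measure_ne_top P _)).comp hlim
    have hfinal : (P (⋃ n, s ∩ A n)).toReal ≤ ∫ x in s, g x ∂P :=
      le_of_tendsto' hlim2 hAn
    refine le_trans ?_ hfinal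
    exact ENNReal.toReal_mono (measure_ne_top P _) (measure_mono hsub2)
  exact ae_le_of_ae_le_trim htrim

end Meas

end Aux

/-- Decomposition `M_t/S_t = 1 + Q_t − L_t`; `Q` is a supermartingale, `L` is nondecreasing and
increases only when `M` attains a new maximum; consequently `Z_t ≤ 1 + Q_t − L_t` a.s. -/
theorem stmt3 {Ω : Type*} {m0 : MeasurableSpace Ω} {P : Measure Ω} [IsProbabilityMeasure P]
    (ℱ : Filtration ℕ m0) (M : ℕ → Ω → ℝ)
    (hsuper : Supermartingale M ℱ P) (hnonneg : ∀ t ω, 0 ≤ M t ω)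
    (hone : ∀ ω, M 0 ω = 1) :
    (∀ t ω, M t ω / runMax M t ω = 1 + Qproc M t ω - Lproc M t ω)
    ∧ Supermartingale (Qproc M) ℱ P
    ∧ (∀ ω, Monotone (fun t => Lproc M t ω))
    ∧ (∀ t ω, runMax M (t + 1) ω = runMax M t ω → Lproc M (t + 1) ω = Lproc M t ω)
    ∧ (∀ t : ℕ, ∀ᵐ ω ∂P,
        (P[Set.indicator {ω' | (t : ℕ∞) ≤ tauF M ω'} (fun _ => (1 : ℝ)) | ℱ t]) ω
          ≤ 1 + Qproc M t ω - Lproc M t ω) := by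
  refine ⟨decomp hone, Qproc_supermartingale hsuper hnonneg hone,
    Lproc_mono hone hnonneg, fun t ω h => Lproc_flat t ω h, fun t => ?_⟩
  filter_upwards [final_ineq hsuper hnonneg hone t] with ω h
  rw [← decomp hone t ω]
  exact h
end

section
/- Pathwise for every t ∈ ℕ: g(S_t) ≤ Y_t ≤ 𝒢(S_t) and max_{s ≤ t} Y_s = 𝒢(S_t); moreover, on the event {M_t > 0}, 𝒢(M_t) ≤ Y_t. -/
open MeasureTheory Filter Set

/-- The ultimate supremum `S_∞ = sup_t M_t`. -/
noncomputable def supAll {Ω : Type*} (M : ℕ → Ω → ℝ) (ω : Ω) : ℝ :=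
  ⨆ t : ℕ, M t ω

/-- `𝒢 s = ∫_0^1 g(s/u) du`. -/
noncomputable def calG (g : ℝ → ℝ) (s : ℝ) : ℝ :=
  ∫ u in Set.Ioc (0 : ℝ) 1, g (s / u)

/-- `𝒢′ s = ∫_s^∞ (g(x) − g(s))/x² dx`. -/
noncomputable def calG' (g : ℝ → ℝ) (s : ℝ) : ℝ :=
  ∫ x in Set.Ioi s, (g x - g s) / x ^ 2

/-- The Azéma–Yor process `Y t = 𝒢(S t) − (S t − M t)·𝒢′(S t)`. -/
noncomputable def ayProc {Ω : Type*} (g : ℝ → ℝ) (M : ℕ → Ω → ℝ) (t : ℕ) (ω : Ω) : ℝ :=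
  calG g (runMax M t ω) - (runMax M t ω - M t ω) * calG' g (runMax M t ω)

section Aux
variable {g : ℝ → ℝ}

lemma img_eq {s : ℝ} (hs : 0 < s) : (fun u => s / u) '' Ioo (0:ℝ) 1 = Ioi s := by
  ext x
  constructor
  · rintro ⟨u, ⟨hu0, hu1⟩, rfl⟩
    exact mem_Ioi.mpr ((lt_div_iff₀ hu0).mpr (by nlinarith))
  · intro hx
    have hx' : s < x := hx
    refine ⟨s / x, ⟨div_pos hs (hs.trans hx'), (div_lt_one (hs.trans hx')).mpr hx'⟩, ?_⟩
    field_simp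

lemma deriv_sdiv {s : ℝ} (u : ℝ) (hu : u ∈ Ioo (0:ℝ) 1) :
    HasDerivWithinAt (fun u => s / u) (-s / u ^ 2) (Ioo (0:ℝ) 1) u := by
  have h : HasDerivAt (fun u : ℝ => s / u) (-s / u ^ 2) u := by
    have := (hasDerivAt_inv (ne_of_gt hu.1)).const_mul s
    simpa [div_eq_mul_inv, neg_div, mul_comm] using this
  exact h.hasDerivWithinAt

lemma inj_sdiv {s : ℝ} (hs : 0 < s) : InjOn (fun u => s / u) (Ioo (0:ℝ) 1) := by
  intro u hu v hv h
  simp only at h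
  field_simp [ne_of_gt hu.1, ne_of_gt hv.1] at h
  linarith

lemma abs_deriv_smul_eq {s u : ℝ} (hs : 0 < s) (hu0 : 0 < u) :
    |(-s / u ^ 2)| • (g (s / u) / (s / u) ^ 2) = g (s / u) / s := by
  have habs : |(-s / u ^ 2)| = s / u ^ 2 := by
    rw [neg_div, abs_neg, abs_of_nonneg]
    positivity
  rw [smul_eq_mul, habs, div_pow]
  field_simp

/-- `calG g s = s * ∫_{Ioi s} g x / x²`. -/
lemma calG_eq (hs : 0 < s) :
    calG g s = s * ∫ x in Ioi s, g x / x ^ 2 := by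
  have key := integral_image_eq_integral_abs_deriv_smul measurableSet_Ioo
    (deriv_sdiv (s := s)) (inj_sdiv hs) (fun x => g x / x ^ 2)
  rw [img_eq hs] at key
  have h2 : ∫ u in Ioo (0:ℝ) 1, |(-s / u ^ 2)| • (g (s / u) / (s / u) ^ 2)
      = ∫ u in Ioo (0:ℝ) 1, g (s / u) / s := by
    refine setIntegral_congr_fun measurableSet_Ioo (fun u hu => ?_)
    exact abs_deriv_smul_eq hs hu.1
  rw [h2, integral_div] at key
  rw [calG, integral_Ioc_eq_integral_Ioo, key]
  field_simp

lemma calG_integrand_integrable {s : ℝ} (hs : 0 < s)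
    (hint : IntegrableOn (fun x => g x / x ^ 2) (Ioi s)) :
    IntegrableOn (fun u => g (s / u)) (Ioc (0:ℝ) 1) := by
  rw [integrableOn_Ioc_iff_integrableOn_Ioo]
  have key := (integrableOn_image_iff_integrableOn_abs_deriv_smul measurableSet_Ioo
    (deriv_sdiv (s := s)) (inj_sdiv hs) (fun x => g x / x ^ 2)).mp
    (by rwa [img_eq hs])
  have h2 : IntegrableOn (fun u => g (s / u) / s) (Ioo (0:ℝ) 1) :=
    key.congr_fun (fun u hu => abs_deriv_smul_eq hs hu.1) measurableSet_Ioo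
  have h3 : IntegrableOn (fun u => s * (g (s / u) / s)) (Ioo (0:ℝ) 1) := h2.const_mul s
  refine h3.congr_fun (fun u hu => ?_) measurableSet_Ioo
  field_simp

lemma integrable_inv_sq {s : ℝ} (hs : 0 < s) :
    IntegrableOn (fun x : ℝ => 1 / x ^ 2) (Ioi s) := by
  have := integrableOn_Ioi_rpow_of_lt (by norm_num : (-2:ℝ) < -1) hs
  refine this.congr_fun (fun x hx => ?_) measurableSet_Ioi
  have hx0 : 0 < x := hs.trans hx
  dsimp only
  rw [show (-2:ℝ) = -(2:ℕ) by norm_num, Real.rpow_neg hx0.le, Real.rpow_natCast]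
  simp [one_div]

lemma integral_inv_sq_Ioi {s : ℝ} (hs : 0 < s) :
    ∫ x in Ioi s, 1 / x ^ 2 = 1 / s := by
  have h := integral_Ioi_rpow_of_lt (by norm_num : (-2:ℝ) < -1) hs
  have h2 : ∫ x in Ioi s, 1 / x ^ 2 = ∫ x in Ioi s, x ^ (-2:ℝ) := by
    refine setIntegral_congr_fun measurableSet_Ioi (fun x hx => ?_)
    have hx0 : 0 < x := hs.trans hx
    rw [show (-2:ℝ) = -(2:ℕ) by norm_num, Real.rpow_neg hx0.le, Real.rpow_natCast]
    simp [one_div]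
  rw [h2, h, show (-2:ℝ) + 1 = -1 by norm_num, Real.rpow_neg_one]
  field_simp

lemma integrable_const_div_sq {s : ℝ} (c : ℝ) (hs : 0 < s) :
    IntegrableOn (fun x : ℝ => c / x ^ 2) (Ioi s) := by
  have h3 : IntegrableOn (fun x : ℝ => c * (1 / x ^ 2)) (Ioi s) := (integrable_inv_sq hs).const_mul c
  refine h3.congr_fun (fun x _ => ?_) measurableSet_Ioi
  ring

lemma calG'_eq {s : ℝ} (hs : 0 < s)
    (hint : IntegrableOn (fun x => g x / x ^ 2) (Ioi s)) :
    calG' g s = (∫ x in Ioi s, g x / x ^ 2) - g s / s := by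
  have hconst := integrable_const_div_sq (g s) hs
  have h : calG' g s = ∫ x in Ioi s, (g x / x ^ 2 - g s / x ^ 2) := by
    rw [calG']
    refine setIntegral_congr_fun measurableSet_Ioi (fun x _ => ?_)
    ring
  rw [h, integral_sub hint hconst]
  congr 1
  have h2 : ∫ x in Ioi s, g s / x ^ 2 = g s * ∫ x in Ioi s, 1 / x ^ 2 := by
    rw [← integral_const_mul]
    refine setIntegral_congr_fun measurableSet_Ioi (fun x _ => ?_)
    ring
  rw [h2, integral_inv_sq_Ioi hs]
  ring

lemma calG'_nonneg {s : ℝ} (hs : 0 < s) (hmono : MonotoneOn g (Set.Ioi 0)) :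
    0 ≤ calG' g s := by
  refine setIntegral_nonneg measurableSet_Ioi (fun x hx => ?_)
  have hx' : s < x := hx
  have : g s ≤ g x := hmono (mem_Ioi.mpr hs) (mem_Ioi.mpr (hs.trans hx')) hx'.le
  exact div_nonneg (by linarith) (sq_nonneg x)

lemma g_eq_calG_sub {s : ℝ} (hs : 0 < s)
    (hint : IntegrableOn (fun x => g x / x ^ 2) (Ioi s)) :
    g s = calG g s - s * calG' g s := by
  rw [calG_eq hs, calG'_eq hs hint]
  field_simp
  ring

lemma calG_mono {a b : ℝ} (ha : 0 < a) (hab : a ≤ b)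
    (hmono : MonotoneOn g (Set.Ioi 0))
    (hinta : IntegrableOn (fun x => g x / x ^ 2) (Ioi a))
    (hintb : IntegrableOn (fun x => g x / x ^ 2) (Ioi b)) :
    calG g a ≤ calG g b := by
  have hb : 0 < b := ha.trans_le hab
  refine setIntegral_mono_on (calG_integrand_integrable ha hinta)
    (calG_integrand_integrable hb hintb) measurableSet_Ioc (fun u hu => ?_)
  have hu0 := hu.1
  exact hmono (mem_Ioi.mpr (div_pos ha hu0)) (mem_Ioi.mpr (div_pos hb hu0))
    (by gcongr)

lemma integral_inv_sq_Ioc {m s : ℝ} (hm : 0 < m) (hms : m ≤ s) :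
    ∫ x in Ioc m s, 1 / x ^ 2 = 1 / m - 1 / s := by
  have hfun : EqOn (fun x : ℝ => 1 / x ^ 2) (fun x : ℝ => x ^ (-2:ℤ)) (uIcc m s) := by
    intro x _
    simp only [one_div, zpow_neg]
    norm_cast
  rw [← intervalIntegral.integral_of_le hms, intervalIntegral.integral_congr hfun,
    integral_zpow (Or.inr ⟨by norm_num, fun h => by
      rcases h with ⟨h1, _⟩
      simp only [inf_le_iff] at h1
      rcases h1 with h1 | h1
      · exact absurd h1 (not_le.mpr hm)
      · exact absurd h1 (not_le.mpr (hm.trans_le hms))⟩)]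
  have hs : 0 < s := hm.trans_le hms
  norm_num
  field_simp
  ring

lemma calG_chord {m s : ℝ} (hm : 0 < m) (hms : m ≤ s)
    (hmono : MonotoneOn g (Set.Ioi 0))
    (hintm : IntegrableOn (fun x => g x / x ^ 2) (Ioi m))
    (hints : IntegrableOn (fun x => g x / x ^ 2) (Ioi s)) :
    calG g m ≤ calG g s - (s - m) * calG' g s := by
  have hs : 0 < s := hm.trans_le hms
  set I := ∫ x in Ioi s, g x / x ^ 2 with hI
  set J := ∫ x in Ioc m s, g x / x ^ 2 with hJdef
  have hsplit : ∫ x in Ioi m, g x / x ^ 2 = J + I := by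
    rw [← Ioc_union_Ioi_eq_Ioi hms]
    exact setIntegral_union (Ioc_disjoint_Ioi le_rfl) measurableSet_Ioi
      (hintm.mono_set Ioc_subset_Ioi_self) hints
  have hJ : J ≤ g s * (1 / m - 1 / s) := by
    have h1 : J ≤ ∫ x in Ioc m s, g s / x ^ 2 := by
      refine setIntegral_mono_on (hintm.mono_set Ioc_subset_Ioi_self)
        ((integrable_const_div_sq (g s) hm).mono_set Ioc_subset_Ioi_self)
        measurableSet_Ioc (fun x hx => ?_)
      have hx0 : 0 < x := hm.trans hx.1
      have hgx : g x ≤ g s := hmono (mem_Ioi.mpr hx0) (mem_Ioi.mpr hs) hx.2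
      gcongr
    have h2 : ∫ x in Ioc m s, g s / x ^ 2 = g s * (1 / m - 1 / s) := by
      rw [← integral_inv_sq_Ioc hm hms, ← integral_const_mul]
      refine setIntegral_congr_fun measurableSet_Ioc (fun x _ => ?_)
      ring
    linarith [h1.trans_eq h2]
  rw [calG_eq hm, calG_eq hs, calG'_eq hs hints, hsplit]
  have key : m * J ≤ (s - m) * g s / s := by
    have := mul_le_mul_of_nonneg_left hJ hm.le
    have heq : m * (g s * (1 / m - 1 / s)) = (s - m) * g s / s := by
      field_simp
    linarith [this.trans_eq heq]
  have hexp : s * I - (s - m) * (I - g s / s) = m * I + (s - m) * g s / s := by ring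
  rw [hexp]
  nlinarith [key]

lemma runMax_pos_facts {Ω : Type*} (M : ℕ → Ω → ℝ) (hone : ∀ ω, M 0 ω = 1)
    (t : ℕ) (ω : Ω) : 0 < runMax M t ω := by
  have h1 : M 0 ω ≤ runMax M t ω :=
    Finset.le_sup' (fun s => M s ω) (Finset.mem_range.mpr (Nat.succ_pos t))
  rw [hone ω] at h1
  linarith

lemma runMax_mono_s9 {Ω : Type*} (M : ℕ → Ω → ℝ) {s t : ℕ} (hst : s ≤ t) (ω : Ω) :
    runMax M s ω ≤ runMax M t ω := by
  refine Finset.sup'_le _ _ (fun i hi => ?_)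
  exact Finset.le_sup' (fun s => M s ω)
    (Finset.mem_range.mpr (lt_of_lt_of_le (Finset.mem_range.mp hi) (by omega)))

end Aux

/-- Pathwise: `g(S_t) ≤ Y_t ≤ 𝒢(S_t)`, `max_{s ≤ t} Y_s = 𝒢(S_t)`, and `𝒢(M_t) ≤ Y_t`
whenever `M_t > 0`. -/
theorem stmt9 {Ω : Type*} {m0 : MeasurableSpace Ω} {P : Measure Ω} [IsProbabilityMeasure P]
    (ℱ : Filtration ℕ m0) (M : ℕ → Ω → ℝ)
    (hsuper : Supermartingale M ℱ P) (hnonneg : ∀ t ω, 0 ≤ M t ω)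
    (hone : ∀ ω, M 0 ω = 1)
    (g : ℝ → ℝ)
    (hg0 : ∀ x ∈ Set.Ioi (0 : ℝ), 0 ≤ g x)
    (hmono : MonotoneOn g (Set.Ioi 0))
    (hint : ∀ a ∈ Set.Ioi (0 : ℝ), IntegrableOn (fun x => g x / x ^ 2) (Set.Ioi a)) :
    ∀ t ω,
      g (runMax M t ω) ≤ ayProc g M t ω
      ∧ ayProc g M t ω ≤ calG g (runMax M t ω)
      ∧ runMax (ayProc g M) t ω = calG g (runMax M t ω)
      ∧ (0 < M t ω → calG g (M t ω) ≤ ayProc g M t ω) := by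
  intro t ω
  set S := runMax M t ω with hSdef
  have hSpos : 0 < S := runMax_pos_facts M hone t ω
  have hMleS : M t ω ≤ S :=
    Finset.le_sup' (fun s => M s ω) (Finset.mem_range.mpr (Nat.lt_succ_self t))
  have hM0 : 0 ≤ M t ω := hnonneg t ω
  have hintS := hint S (mem_Ioi.mpr hSpos)
  have hG'0 : 0 ≤ calG' g S := calG'_nonneg hSpos hmono
  refine ⟨?_, ?_, ?_, ?_⟩
  · -- g S ≤ Y
    rw [ayProc, ← hSdef, g_eq_calG_sub hSpos hintS]
    have : (S - M t ω) * calG' g S ≤ S * calG' g S := by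
      apply mul_le_mul_of_nonneg_right _ hG'0
      linarith
    linarith
  · -- Y ≤ calG S
    rw [ayProc, ← hSdef]
    have : 0 ≤ (S - M t ω) * calG' g S := mul_nonneg (by linarith) hG'0
    linarith
  · -- runMax Y = calG S
    apply le_antisymm
    · refine Finset.sup'_le _ _ (fun i hi => ?_)
      have hit : i ≤ t := by
        have := Finset.mem_range.mp hi; omega
      have hSi : 0 < runMax M i ω := runMax_pos_facts M hone i ω
      have hSile : runMax M i ω ≤ S := runMax_mono_s9 M hit ω
      have hintSi := hint _ (mem_Ioi.mpr hSi)
      have hY_le : ayProc g M i ω ≤ calG g (runMax M i ω) := by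
        rw [ayProc]
        have hMle' : M i ω ≤ runMax M i ω :=
          Finset.le_sup' (fun s => M s ω) (Finset.mem_range.mpr (Nat.lt_succ_self i))
        have : 0 ≤ (runMax M i ω - M i ω) * calG' g (runMax M i ω) :=
          mul_nonneg (by linarith) (calG'_nonneg hSi hmono)
        linarith
      exact hY_le.trans (calG_mono hSi hSile hmono hintSi hintS)
    · obtain ⟨i, hi, hieq⟩ := Finset.exists_mem_eq_sup'
        (Finset.nonempty_range_iff.mpr (Nat.succ_ne_zero t)) (fun s => M s ω)
      have hit : i ≤ t := by
        have := Finset.mem_range.mp hi; omega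
      have hSi : runMax M i ω = S := by
        apply le_antisymm (runMax_mono_s9 M hit ω)
        calc S = M i ω := hieq
          _ ≤ runMax M i ω :=
            Finset.le_sup' (fun s => M s ω) (Finset.mem_range.mpr (Nat.lt_succ_self i))
      have hMi : M i ω = S := hieq.symm
      have hYi : ayProc g M i ω = calG g S := by
        rw [ayProc, hSi, hMi]
        ring
      calc calG g S = ayProc g M i ω := hYi.symm
        _ ≤ runMax (ayProc g M) t ω :=
          Finset.le_sup' (fun s => ayProc g M s ω) hi
  · -- calG (M t ω) ≤ Y on {M t ω > 0}
    intro hMpos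
    rw [ayProc, ← hSdef]
    have := calG_chord hMpos hMleS hmono (hint _ (mem_Ioi.mpr hMpos)) hintS
    linarith
end
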